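/- Let (X, y) be a C¹ solution on [τ,∞) of X'(t) = β₀e^{-μ₀τ}X(t-τ) - μ₀X(t) - γ₀X(t)y(t), y'(t) = αγ₀X(t)y(t) - δy(t), with X(t) > 0 and y(t) > 0 for all t. Then the function F(t) = αX* g(X(t)/X*) + y* g(y(t)/y*) + αβ₀e^{-μ₀τ}X* ∫₀^τ g(X(t+s-τ)/X*) ds satisfies F'(t) = -αβ₀X*e^{-μ₀τ} g(X(t-τ)/X(t)) ≤ 0 for all t ≥ τ; in particular F is nonincreasing. -/

import Mathlib

open MeasureTheory intervalIntegral in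
private lemma ftc_helper_lyap (G : ℝ → ℝ) (hGc : Continuous G) (τ t : ℝ) :
    HasDerivAt (fun r => (∫ u in (0:ℝ)..r, G u) - ∫ u in (0:ℝ)..(r - τ), G u)
      (G t - G (t - τ)) t := by
  have h1 := (hGc.integral_hasStrictDerivAt 0 t).hasDerivAt
  have h2 : HasDerivAt (fun r => ∫ u in (0:ℝ)..(r - τ), G u) (G (t - τ)) t := by
    have h3 := ((hGc.integral_hasStrictDerivAt 0 (t - τ)).hasDerivAt).comp t
      ((hasDerivAt_id t).sub_const τ)
    have h4 : HasDerivAt ((fun u => ∫ x in (0:ℝ)..u, G x) ∘ fun x => x - τ) (G (t - τ)) t := by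
      simpa using h3
    exact h4
  exact h1.sub h2

private lemma key_alg_lyap (α γ₀ b μ₀ δ Xs ys x xt yy L Lt LXs : ℝ)
    (hx : x ≠ 0) (hyy : yy ≠ 0) (hXs : Xs ≠ 0) (hys : ys ≠ 0)
    (hδ : δ = α * γ₀ * Xs) (hμ : μ₀ = b - γ₀ * ys) :
    α * Xs * ((b * xt - μ₀ * x - γ₀ * x * yy) / Xs - (b * xt - μ₀ * x - γ₀ * x * yy) / x)
      + ys * ((α * γ₀ * x * yy - δ * yy) / ys - (α * γ₀ * x * yy - δ * yy) / yy)
      + α * b * Xs * ((x / Xs - L + LXs - 1) - (xt / Xs - Lt + LXs - 1))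
    = -(α * b * Xs) * (xt / x - (Lt - L) - 1) := by
  subst hδ hμ
  field_simp
  ring

open MeasureTheory intervalIntegral in
theorem lyapunov_functional_nonincreasing
    (β₀ μ₀ γ₀ δ τ α : ℝ)
    (hβ : 0 < β₀) (hμ : 0 < μ₀) (hγ : 0 < γ₀) (hδ : 0 < δ) (hτ : 0 < τ)
    (hα : 0 < α ∧ α < 1) (hR : β₀ * Real.exp (-μ₀ * τ) / μ₀ > 1)
    (Xs ys : ℝ) (hXs : Xs = δ / (α * γ₀))
    (hys : ys = (β₀ * Real.exp (-μ₀ * τ) - μ₀) / γ₀)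
    (g : ℝ → ℝ) (hg : ∀ x, g x = x - Real.log x - 1)
    (X y : ℝ → ℝ)
    (hXC : Continuous X) (hyC : Continuous y)
    (hXpos : ∀ t, 0 < X t) (hypos : ∀ t, 0 < y t)
    (hXode : ∀ t ≥ τ, HasDerivAt X
      (β₀ * Real.exp (-μ₀ * τ) * X (t - τ) - μ₀ * X t - γ₀ * X t * y t) t)
    (hyode : ∀ t ≥ τ, HasDerivAt y (α * γ₀ * X t * y t - δ * y t) t)
    (F : ℝ → ℝ)
    (hF : ∀ t, F t = α * Xs * g (X t / Xs) + ys * g (y t / ys)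
      + α * β₀ * Real.exp (-μ₀ * τ) * Xs *
          ∫ s in (0:ℝ)..τ, g (X (t + s - τ) / Xs)) :
    (∀ t ≥ τ, HasDerivWithinAt F
        (-(α * β₀ * Xs * Real.exp (-μ₀ * τ)) * g (X (t - τ) / X t))
        (Set.Ici τ) t ∧
      -(α * β₀ * Xs * Real.exp (-μ₀ * τ)) * g (X (t - τ) / X t) ≤ 0) ∧
    AntitoneOn F (Set.Ici τ) := by
  obtain ⟨hα0, hα1⟩ := hα
  have hXspos : 0 < Xs := by rw [hXs]; positivity
  have hμb : μ₀ < β₀ * Real.exp (-μ₀ * τ) := (one_lt_div hμ).mp hR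
  have hyspos : 0 < ys := by rw [hys]; exact div_pos (by linarith) hγ
  -- the function inside the integral, as a function of the "space" variable
  set G : ℝ → ℝ := fun u => X u / Xs - Real.log (X u) + Real.log Xs - 1 with hGdef
  have hGc : Continuous G := by
    refine ((((hXC.div_const Xs).sub (hXC.log fun u => (hXpos u).ne')).add
      continuous_const).sub continuous_const)
  -- rewrite F in an explicit, differentiable form
  have hint : ∀ t, (∫ s in (0:ℝ)..τ, g (X (t + s - τ) / Xs))
      = (∫ u in (0:ℝ)..t, G u) - ∫ u in (0:ℝ)..(t - τ), G u := by
    intro t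
    have h1 : (∫ s in (0:ℝ)..τ, g (X (t + s - τ) / Xs))
        = ∫ s in (0:ℝ)..τ, G (s + (t - τ)) := by
      apply intervalIntegral.integral_congr
      intro s _
      show g (X (t + s - τ) / Xs) = G (s + (t - τ))
      rw [hg, hGdef]
      simp only
      rw [Real.log_div (hXpos _).ne' hXspos.ne']
      have he : s + (t - τ) = t + s - τ := by ring
      rw [he]; ring
    rw [h1, intervalIntegral.integral_comp_add_right]
    have h2 : (0:ℝ) + (t - τ) = t - τ := by ring
    have h3 : τ + (t - τ) = t := by ring
    rw [h2, h3,
      ← intervalIntegral.integral_interval_sub_left (hGc.intervalIntegrable 0 t)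
        (hGc.intervalIntegrable 0 (t - τ))]
  have hFΦ : F = fun t => α * Xs * (X t / Xs - Real.log (X t) + Real.log Xs - 1)
      + ys * (y t / ys - Real.log (y t) + Real.log ys - 1)
      + α * β₀ * Real.exp (-μ₀ * τ) * Xs *
        ((∫ u in (0:ℝ)..t, G u) - ∫ u in (0:ℝ)..(t - τ), G u) := by
    funext t
    rw [hF t, hint t]
    simp only [hg]
    rw [Real.log_div (hXpos t).ne' hXspos.ne', Real.log_div (hypos t).ne' hyspos.ne']
    ring
  -- the derivative of F at each t ≥ τ
  have hder : ∀ t ≥ τ, HasDerivAt F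
      (-(α * β₀ * Xs * Real.exp (-μ₀ * τ)) * g (X (t - τ) / X t)) t := by
    intro t ht
    have hx := hXode t ht
    have hy := hyode t ht
    have hd1 : HasDerivAt (fun s => α * Xs * (X s / Xs - Real.log (X s) + Real.log Xs - 1))
        (α * Xs * ((β₀ * Real.exp (-μ₀ * τ) * X (t - τ) - μ₀ * X t - γ₀ * X t * y t) / Xs
          - (β₀ * Real.exp (-μ₀ * τ) * X (t - τ) - μ₀ * X t - γ₀ * X t * y t) / X t)) t := by
      exact HasDerivAt.const_mul _
        ((((hx.div_const Xs).sub (hx.log (hXpos t).ne')).add_const _).sub_const 1)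
    have hd2 : HasDerivAt (fun s => ys * (y s / ys - Real.log (y s) + Real.log ys - 1))
        (ys * ((α * γ₀ * X t * y t - δ * y t) / ys
          - (α * γ₀ * X t * y t - δ * y t) / y t)) t := by
      exact HasDerivAt.const_mul _
        ((((hy.div_const ys).sub (hy.log (hypos t).ne')).add_const _).sub_const 1)
    have hd3 : HasDerivAt (fun s => α * β₀ * Real.exp (-μ₀ * τ) * Xs *
        ((∫ u in (0:ℝ)..s, G u) - ∫ u in (0:ℝ)..(s - τ), G u))
        (α * β₀ * Real.exp (-μ₀ * τ) * Xs * (G t - G (t - τ))) t :=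
      HasDerivAt.const_mul _ (ftc_helper_lyap G hGc τ t)
    have hD := (hd1.add hd2).add hd3
    rw [hFΦ]
    have heq : α * Xs * ((β₀ * Real.exp (-μ₀ * τ) * X (t - τ) - μ₀ * X t - γ₀ * X t * y t) / Xs
          - (β₀ * Real.exp (-μ₀ * τ) * X (t - τ) - μ₀ * X t - γ₀ * X t * y t) / X t)
        + ys * ((α * γ₀ * X t * y t - δ * y t) / ys
          - (α * γ₀ * X t * y t - δ * y t) / y t)
        + α * β₀ * Real.exp (-μ₀ * τ) * Xs * (G t - G (t - τ))
        = -(α * β₀ * Xs * Real.exp (-μ₀ * τ)) * g (X (t - τ) / X t) := by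
      rw [hg, Real.log_div (hXpos (t - τ)).ne' (hXpos t).ne', hGdef]
      simp only
      have h := key_alg_lyap α γ₀ (β₀ * Real.exp (-μ₀ * τ)) μ₀ δ Xs ys (X t) (X (t - τ))
        (y t) (Real.log (X t)) (Real.log (X (t - τ))) (Real.log Xs)
        (hXpos t).ne' (hypos t).ne' hXspos.ne' hyspos.ne'
        (by rw [hXs]; field_simp) (by rw [hys]; field_simp; ring)
      linear_combination h
    exact heq ▸ hD
  have hnonpos : ∀ t ≥ τ, -(α * β₀ * Xs * Real.exp (-μ₀ * τ)) * g (X (t - τ) / X t) ≤ 0 := by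
    intro t ht
    have hr : 0 < X (t - τ) / X t := div_pos (hXpos _) (hXpos _)
    have hg0 : 0 ≤ g (X (t - τ) / X t) := by
      rw [hg]
      have := Real.log_le_sub_one_of_pos hr
      linarith
    have h1 : 0 ≤ α * β₀ * Xs * Real.exp (-μ₀ * τ) * g (X (t - τ) / X t) :=
      mul_nonneg (by positivity) hg0
    linarith
  refine ⟨fun t ht => ⟨(hder t ht).hasDerivWithinAt, hnonpos t ht⟩, ?_⟩
  -- F is continuous
  have hAc : Continuous fun r => ∫ u in (0:ℝ)..r, G u := by
    rw [continuous_iff_continuousAt]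
    exact fun s => ((hGc.integral_hasStrictDerivAt 0 s).hasDerivAt).continuousAt
  have hFc : Continuous F := by
    rw [hFΦ]
    refine Continuous.add (Continuous.add ?_ ?_) ?_
    · exact continuous_const.mul ((((hXC.div_const Xs).sub
        (hXC.log fun u => (hXpos u).ne')).add continuous_const).sub continuous_const)
    · exact continuous_const.mul ((((hyC.div_const ys).sub
        (hyC.log fun u => (hypos u).ne')).add continuous_const).sub continuous_const)
    · exact continuous_const.mul (hAc.sub (hAc.comp (continuous_id.sub continuous_const)))
  apply antitoneOn_of_deriv_nonpos (convex_Ici τ) hFc.continuousOn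
  · intro x hx
    rw [interior_Ici] at hx
    exact (hder x hx.le).differentiableAt.differentiableWithinAt
  · intro x hx
    rw [interior_Ici] at hx
    rw [(hder x hx.le).deriv]
    exact hnonpos x hx.le
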